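/- Let λ ∈ (0, 1/2), β ≥ 0, γ > 0, ε > 0, and T > 0. Let μ̄ : [0, T] → ℝ be the unique solution of the initial value problem μ̄(0) = ε, μ̄′(s) = ε·μ̄(s) + γ²·(1+ε)^{2λ+2}/((2λ+1)·μ̄(s)) + ε + β for s ∈ [0, T]. Then there exist a constant k ≥ e and a nondecreasing continuously differentiable function ν : [0, T] → [0, ∞) with ν(0) = 0 such that the function φ(s, x) := (x+k)·exp( μ̄(s)·(ln(x+k))^{λ+1/2} + ν(s) ) is C^{1,2} on [0, T] × [0, ∞) and satisfies, for every (s, x) ∈ [0, T] × [0, ∞) and every z ∈ ℝ^d (d ≥ 1): −∂ₓφ(s, x)·( β·x·(ln x)^{λ+1/2}·𝟙_{x>1} + γ·|z|·|ln|z||^λ ) + (1/2)·∂ₓₓφ(s, x)·|z|² + ∂ₛφ(s, x) ≥ 0, where the map z ↦ |z|·|ln|z||^λ is extended by the value 0 at z = 0. -/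

import Mathlib

open Real


lemma aux_small (lam r : ℝ) (h0 : 0 ≤ lam) (h1 : lam ≤ 1) (hr : 0 < r) (hr1 : r ≤ 1) :
    r * (-Real.log r) ^ lam ≤ 1 := by
  set t := -Real.log r with ht
  have ht0 : 0 ≤ t := by
    simp only [ht, neg_nonneg]
    exact Real.log_nonpos hr.le hr1
  have hrt : r = Real.exp (-t) := by
    simp [ht, Real.exp_log hr]
  rcases le_total t 1 with h | h
  · have : t ^ lam ≤ 1 := Real.rpow_le_one ht0 h h0
    nlinarith [Real.rpow_nonneg ht0 lam]
  · have h2 : t ^ lam ≤ t := by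
      calc t ^ lam ≤ t ^ (1:ℝ) := Real.rpow_le_rpow_of_exponent_le h h1
      _ = t := Real.rpow_one t
    have h3 : t < Real.exp t := Real.add_one_le_exp t |>.trans_lt' (by linarith)
    have h4 : r * t ≤ 1 := by
      rw [hrt, Real.exp_neg]
      rw [inv_mul_le_iff₀ (Real.exp_pos t)]
      nlinarith
    have hrpos : 0 < r := hr
    nlinarith
  
lemma aux_amgm (q b r : ℝ) (hb : 0 < b) : q * r ≤ b / 2 * r ^ 2 + q ^ 2 / (2 * b) := by
  have h := sq_nonneg (b * r - q)
  have key : 2 * b * (q * r) ≤ 2 * b * (b / 2 * r ^ 2 + q ^ 2 / (2 * b)) := by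
    have : q ^ 2 / (2 * b) * (2 * b) = q ^ 2 := by field_simp
    nlinarith
  exact le_of_mul_le_mul_left key (by linarith)

lemma aux_delta (eps : ℝ) (he : 0 < eps) :
    (1 + min eps 1 / 8) ^ 2 ≤ (1 - min eps 1 / 8) * (1 + eps) ^ 2 := by
  set d := min eps 1 / 8 with hd
  have h1 : d ≤ eps / 8 := by simp only [hd]; nlinarith [min_le_left eps 1]
  have h2 : d ≤ 1 / 8 := by simp only [hd]; nlinarith [min_le_right eps 1]
  have h3 : 0 < d := by simp only [hd]; positivity
  nlinarith [sq_nonneg eps, sq_nonneg d, mul_pos h3 he]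

lemma step_beta (bet eps c a P x L w : ℝ)
    (hbet : 0 ≤ bet) (heps : 0 < eps) (hc : 0 < c) (ha0 : 0 < a)
    (hx0 : 0 ≤ x) (hxP : x ≤ P) (hP0 : 0 < P) (hL : L = Real.log P)
    (hLa0 : 0 < L ^ a) (hw : w = c * a * L ^ (a-1)) (hw0 : 0 ≤ w)
    (hbe : bet * a * L ^ (a-1) ≤ eps) :
    (1 + w) * (if 1 < x then bet * x * Real.log x ^ a else 0)
      ≤ P * (bet + eps * c) * L ^ a := by
  have hbPL : 0 ≤ P * (bet + eps * c) * L ^ a :=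
    mul_nonneg (mul_nonneg hP0.le (add_nonneg hbet (mul_pos heps hc).le)) hLa0.le
  split_ifs with hx1
  · have hlx0 : 0 ≤ Real.log x := Real.log_nonneg hx1.le
    have hlx : Real.log x ≤ L := by
      rw [hL]; exact (Real.log_le_log_iff (by linarith) hP0).mpr hxP
    have hpow : Real.log x ^ a ≤ L ^ a := Real.rpow_le_rpow hlx0 hlx ha0.le
    have h1 : bet * x * Real.log x ^ a ≤ bet * P * L ^ a := by
      have hbx : bet * x ≤ bet * P := mul_le_mul_of_nonneg_left hxP hbet
      have := mul_le_mul hbx hpow (Real.rpow_nonneg hlx0 a) (mul_nonneg hbet hP0.le)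
      linarith
    have h2 : w * bet ≤ eps * c := by
      calc w * bet = c * (bet * a * L ^ (a-1)) := by rw [hw]; ring
        _ ≤ c * eps := mul_le_mul_of_nonneg_left hbe hc.le
        _ = eps * c := by ring
    have h4 := mul_le_mul_of_nonneg_left h1 hw0
    have h5 := mul_le_mul_of_nonneg_right h2 (mul_pos hP0 hLa0).le
    nlinarith
  · simpa using hbPL

set_option maxHeartbeats 2000000 in
lemma step_z (lam eps gam c m P r a dl th ta L w X : ℝ)
    (hlam : 0 < lam) (hlam2 : lam < 1/2) (heps : 0 < eps) (hgam : 0 < gam)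
    (hm : 0 < m) (hmc : m ≤ c)
    (ha : a = lam + 1/2) (hdl : dl = min eps 1 / 8) (hth : th = eps / (2 * (1 + eps)))
    (hta : ta = th / lam)
    (hP1 : 1 ≤ P) (hr0 : 0 ≤ r) (hL : L = Real.log P) (hL1 : 1 ≤ L)
    (hw : w = c * a * L ^ (a - 1)) (hwd : w ≤ dl)
    (hXlb : (1 - dl) * w ≤ X)
    (hK5 : 8 * gam / (ta ^ lam * m * a) * L ≤ P ^ (eps / 2)) :
    (1 + w) * (gam * (r * |Real.log r| ^ lam))
      ≤ 1/2 * (X / P) * r ^ 2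
        + P * (gam ^ 2 * (1 + eps) ^ (2 * lam + 2) / ((2 * lam + 1) * c) * L ^ a)
        + 2 * gam * P := by
  have hc : 0 < c := lt_of_lt_of_le hm hmc
  have hP0 : (0:ℝ) < P := by linarith
  have hL0 : (0:ℝ) < L := by linarith
  have ha0 : (0:ℝ) < a := by rw [ha]; linarith
  have ha1 : a < 1 := by rw [ha]; linarith
  have hdl0 : 0 < dl := by rw [hdl]; have := lt_min heps one_pos; linarith
  have hdl18 : dl ≤ 1/8 := by rw [hdl]; have := min_le_right eps 1; linarith
  have hth0 : 0 < th := by rw [hth]; positivity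
  have hth12 : th < 1/2 := by rw [hth, div_lt_iff₀ (by positivity)]; linarith
  have hta0 : 0 < ta := by rw [hta]; positivity
  have htal : 0 < ta ^ lam := rpow_pos_of_pos hta0 _
  have hLa1 : 0 < L ^ (a - 1) := rpow_pos_of_pos hL0 _
  have hLa : 0 < L ^ a := rpow_pos_of_pos hL0 _
  have hwpos : 0 < w := by rw [hw]; exact mul_pos (mul_pos hc ha0) hLa1
  have hX0 : 0 < X := lt_of_lt_of_le (mul_pos (by linarith) hwpos) hXlb
  have h1w2 : 1 + w ≤ 2 := by linarith
  have h1w : 1 + w ≤ 1 + dl := by linarith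
  have h2l1 : (0:ℝ) < 2 * lam + 1 := by linarith
  have hE2 : (0:ℝ) < (1 + eps) ^ (2 * lam + 2) := rpow_pos_of_pos (by linarith) _
  have hT0 : 0 ≤ P * (gam ^ 2 * (1 + eps) ^ (2 * lam + 2) / ((2 * lam + 1) * c) * L ^ a) := by
    have : 0 < gam ^ 2 * (1 + eps) ^ (2 * lam + 2) / ((2 * lam + 1) * c) :=
      div_pos (mul_pos (by positivity) hE2) (mul_pos h2l1 hc)
    positivity
  have hXr0 : 0 ≤ 1/2 * (X / P) * r ^ 2 := by positivity
  have h2gP : 2 * gam ≤ 2 * gam * P := by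
    have := mul_le_mul_of_nonneg_left hP1 (by positivity : (0:ℝ) ≤ 2 * gam)
    linarith
  have h2gP0 : 0 ≤ 2 * gam * P := by positivity
  have hLaone : 1 ≤ L ^ a := Real.one_le_rpow hL1 ha0.le
  have eL : L ^ (a - 1) * L = L ^ a := by
    rw [← Real.rpow_add_one hL0.ne' (a - 1)]; congr 1; ring
  rcases eq_or_lt_of_le hr0 with hre | hrpos
  · have ez : (1 + w) * (gam * (r * |Real.log r| ^ lam)) = 0 := by
      rw [← hre]; ring
    have ez2 : 1/2 * (X / P) * r ^ 2 = 0 := by rw [← hre]; ring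
    rw [ez, ez2]
    linarith [hT0, h2gP0]
  rcases le_or_gt r 1 with hr1 | hr1
  · -- small r
    have habs : |Real.log r| = -Real.log r := abs_of_nonpos (Real.log_nonpos hrpos.le hr1)
    rw [habs]
    have hsm := aux_small lam r hlam.le (by linarith) hrpos hr1
    have hpr : 0 ≤ r * (-Real.log r) ^ lam :=
      mul_nonneg hrpos.le (Real.rpow_nonneg (neg_nonneg.mpr (Real.log_nonpos hrpos.le hr1)) _)
    have e1 : (1 + w) * (gam * (r * (-Real.log r) ^ lam)) ≤ 2 * (gam * (r * (-Real.log r) ^ lam)) :=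
      mul_le_mul_of_nonneg_right h1w2 (mul_nonneg hgam.le hpr)
    have e2 : gam * (r * (-Real.log r) ^ lam) ≤ gam := mul_le_of_le_one_right hgam.le hsm
    linarith [hT0, hXr0, h2gP]
  · -- large r
    have hlr : 0 < Real.log r := Real.log_pos hr1
    have habs : |Real.log r| = Real.log r := abs_of_pos hlr
    rw [habs]
    have hglr0 : 0 ≤ gam * (r * Real.log r ^ lam) :=
      mul_nonneg hgam.le (mul_nonneg hr0 (Real.rpow_nonneg hlr.le _))
    rcases le_or_gt r (P ^ (1 + eps)) with hmid | hbig
    · -- middle regime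
      have hlr2 : Real.log r ≤ (1 + eps) * L := by
        have h1 : Real.log r ≤ Real.log (P ^ (1 + eps)) :=
          (Real.log_le_log_iff hrpos (rpow_pos_of_pos hP0 _)).mpr hmid
        rwa [Real.log_rpow hP0, ← hL] at h1
      have hq : Real.log r ^ lam ≤ (1 + eps) ^ lam * L ^ lam := by
        calc Real.log r ^ lam ≤ ((1 + eps) * L) ^ lam :=
              Real.rpow_le_rpow hlr.le hlr2 hlam.le
          _ = _ := Real.mul_rpow (by linarith) (by linarith)
      have hb0 : 0 < (1 - dl) * w / P := by
        apply div_pos (mul_pos (by linarith) hwpos) hP0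
      have amgm := aux_amgm ((1 + dl) * gam * ((1 + eps) ^ lam * L ^ lam)) ((1 - dl) * w / P) r hb0
      have hq0 : 0 ≤ (1 + eps) ^ lam * L ^ lam :=
        mul_nonneg (Real.rpow_nonneg (by linarith) _) (Real.rpow_nonneg hL0.le _)
      have hLHS : (1 + w) * (gam * (r * Real.log r ^ lam))
          ≤ (1 + dl) * gam * ((1 + eps) ^ lam * L ^ lam) * r := by
        have t1 : r * Real.log r ^ lam ≤ r * ((1 + eps) ^ lam * L ^ lam) :=
          mul_le_mul_of_nonneg_left hq hr0
        have t2 : gam * (r * Real.log r ^ lam) ≤ gam * (r * ((1 + eps) ^ lam * L ^ lam)) :=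
          mul_le_mul_of_nonneg_left t1 hgam.le
        have t3 : (1 + w) * (gam * (r * Real.log r ^ lam))
            ≤ (1 + dl) * (gam * (r * ((1 + eps) ^ lam * L ^ lam))) :=
          mul_le_mul h1w t2 hglr0 (by linarith)
        calc (1 + w) * (gam * (r * Real.log r ^ lam))
            ≤ (1 + dl) * (gam * (r * ((1 + eps) ^ lam * L ^ lam))) := t3
          _ = (1 + dl) * gam * ((1 + eps) ^ lam * L ^ lam) * r := by ring
      have hbX : (1 - dl) * w / P / 2 * r ^ 2 ≤ 1/2 * (X / P) * r ^ 2 := by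
        have h := mul_le_mul_of_nonneg_right
          (show (1 - dl) * w / P ≤ X / P by gcongr) (sq_nonneg r)
        linarith
      -- q^2/(2b0) ≤ T
      have e1 : L ^ (a - 1) * L ^ a = L ^ (lam + lam) := by
        rw [← Real.rpow_add hL0]; congr 1; rw [ha]; ring
      have e2 : (1 + eps) ^ (2 * lam + 2) = (1 + eps) ^ (lam + lam) * (1 + eps) ^ 2 := by
        rw [← Real.rpow_natCast (1 + eps) 2, ← Real.rpow_add (by linarith)]
        congr 1; push_cast; ring
      have e3 : L ^ lam * L ^ lam = L ^ (lam + lam) := (Real.rpow_add hL0 _ _).symm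
      have e4 : (1 + eps) ^ lam * (1 + eps) ^ lam = (1 + eps) ^ (lam + lam) :=
        (Real.rpow_add (by linarith) _ _).symm
      have hq2T : ((1 + dl) * gam * ((1 + eps) ^ lam * L ^ lam)) ^ 2 / (2 * ((1 - dl) * w / P))
          ≤ P * (gam ^ 2 * (1 + eps) ^ (2 * lam + 2) / ((2 * lam + 1) * c) * L ^ a) := by
        rw [div_le_iff₀ (by positivity)]
        have eq1 : ((1 + dl) * gam * ((1 + eps) ^ lam * L ^ lam)) ^ 2
            = (1 + dl) ^ 2 * gam ^ 2 * ((1 + eps) ^ lam * (1 + eps) ^ lam)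
              * (L ^ lam * L ^ lam) := by ring
        have h2a : 2 * lam + 1 = 2 * a := by rw [ha]; ring
        have eq2 : P * (gam ^ 2 * (1 + eps) ^ (2 * lam + 2) / ((2 * lam + 1) * c) * L ^ a)
              * (2 * ((1 - dl) * w / P))
            = (1 - dl) * gam ^ 2 * (1 + eps) ^ (2 * lam + 2) * (L ^ (a - 1) * L ^ a) := by
          rw [hw, h2a]
          field_simp
        rw [eq1, eq2, e1, e2, e3, e4]
        have hdel := aux_delta eps heps
        rw [← hdl] at hdel
        have hpos : 0 ≤ gam ^ 2 * (1 + eps) ^ (lam + lam) * L ^ (lam + lam) := by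
          have h5 : 0 ≤ (1 + eps) ^ (lam + lam) := Real.rpow_nonneg (by linarith) _
          have h6 : 0 ≤ L ^ (lam + lam) := Real.rpow_nonneg hL0.le _
          positivity
        have hh := mul_le_mul_of_nonneg_right hdel hpos
        linarith
      linarith [amgm, hLHS, hbX, hq2T]
    · -- big r regime
      have hlog_le : Real.log r ≤ r ^ ta / ta := Real.log_le_rpow_div hr0 hta0
      have hpl : Real.log r ^ lam ≤ r ^ th / ta ^ lam := by
        calc Real.log r ^ lam ≤ (r ^ ta / ta) ^ lam :=
              Real.rpow_le_rpow hlr.le hlog_le hlam.le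
          _ = (r ^ ta) ^ lam / ta ^ lam := Real.div_rpow (Real.rpow_nonneg hr0 _) hta0.le _
          _ = r ^ (ta * lam) / ta ^ lam := by rw [← Real.rpow_mul hr0]
          _ = r ^ th / ta ^ lam := by
              congr 2; rw [hta]; field_simp
      have hrpow : P * P ^ (eps / 2) ≤ r ^ (1 - th) := by
        have h1 : P * P ^ (eps / 2) = (P ^ (1 + eps)) ^ (1 - th) := by
          rw [← Real.rpow_mul hP0.le]
          rw [show (1 + eps) * (1 - th) = 1 + eps / 2 by rw [hth]; field_simp; ring]
          rw [Real.rpow_add hP0, Real.rpow_one]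
        rw [h1]
        exact Real.rpow_le_rpow (Real.rpow_nonneg hP0.le _) hbig.le (by linarith)
      have hkey : 2 * gam / ta ^ lam ≤ 1/2 * ((1 - dl) * w / P) * r ^ (1 - th) := by
        have h1 : P * (8 * gam / (ta ^ lam * m * a) * L) ≤ r ^ (1 - th) := by
          have h2 := mul_le_mul_of_nonneg_left hK5 hP0.le
          linarith [hrpow]
        have h3 : 0 ≤ 1/2 * ((1 - dl) * w / P) := by
          have := mul_pos (show (0:ℝ) < 1 - dl by linarith) hwpos
          positivity
        have h4 := mul_le_mul_of_nonneg_left h1 h3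
        refine le_trans ?_ h4
        have expand : 1/2 * ((1 - dl) * w / P) * (P * (8 * gam / (ta ^ lam * m * a) * L))
            = 4 * (1 - dl) * gam * (c / m) * (L ^ (a - 1) * L) / ta ^ lam := by
          rw [hw]
          field_simp [htal.ne', hm.ne', ha0.ne', hP0.ne']
          ring
        rw [expand, eL]
        rw [div_le_div_iff_of_pos_right htal]
        have hcm : 1 ≤ c / m := (one_le_div hm).mpr hmc
        have h7 : 1 ≤ c / m * L ^ a := one_le_mul_of_one_le_of_one_le hcm hLaone
        have h8 := mul_le_mul_of_nonneg_left h7 hgam.le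
        have h9 := mul_le_mul_of_nonneg_right
          (show (2:ℝ) ≤ 4 * (1 - dl) by linarith)
          (mul_nonneg hgam.le (mul_nonneg (div_nonneg hc.le hm.le) hLa.le))
        linarith [h8, h9]
      -- now conclude big-r case
      have er2 : (r * r ^ th) * r ^ (1 - th) = r ^ 2 := by
        rw [show r * r ^ th = r ^ (1 + th) by rw [Real.rpow_add hrpos, Real.rpow_one]]
        rw [← Real.rpow_add hrpos]
        rw [show (1 + th + (1 - th)) = ((2:ℕ):ℝ) by push_cast; ring, Real.rpow_natCast]
      have hrth0 : 0 ≤ r * r ^ th := mul_nonneg hr0 (Real.rpow_nonneg hr0 _)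
      have hLHS2 : (1 + w) * (gam * (r * Real.log r ^ lam))
          ≤ 2 * gam / ta ^ lam * (r * r ^ th) := by
        have t1 : r * Real.log r ^ lam ≤ r * (r ^ th / ta ^ lam) :=
          mul_le_mul_of_nonneg_left hpl hr0
        have t2 : gam * (r * Real.log r ^ lam) ≤ gam * (r * (r ^ th / ta ^ lam)) :=
          mul_le_mul_of_nonneg_left t1 hgam.le
        have t3 : (1 + w) * (gam * (r * Real.log r ^ lam))
            ≤ 2 * (gam * (r * (r ^ th / ta ^ lam))) :=
          mul_le_mul h1w2 t2 hglr0 (by norm_num)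
        calc (1 + w) * (gam * (r * Real.log r ^ lam))
            ≤ 2 * (gam * (r * (r ^ th / ta ^ lam))) := t3
          _ = 2 * gam / ta ^ lam * (r * r ^ th) := by field_simp
      have hfin : 2 * gam / ta ^ lam * (r * r ^ th) ≤ 1/2 * (X / P) * r ^ 2 := by
        have t4 := mul_le_mul_of_nonneg_right hkey hrth0
        have t5 : 1/2 * ((1 - dl) * w / P) * r ^ (1 - th) * (r * r ^ th)
            = 1/2 * ((1 - dl) * w / P) * r ^ 2 := by
          rw [← er2]; ring
        have t6 : 1/2 * ((1 - dl) * w / P) * r ^ 2 ≤ 1/2 * (X / P) * r ^ 2 := by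
          have h := mul_le_mul_of_nonneg_right
            (show (1 - dl) * w / P ≤ X / P by gcongr) (sq_nonneg r)
          linarith
        linarith [t4, t5.symm.le]
      linarith [hLHS2, hfin, hT0, h2gP0]

lemma step_X (c a dl L : ℝ) (hc : 0 < c) (ha0 : 0 < a) (hL0 : 0 < L)
    (hdLa : 1 - a ≤ dl * L) :
    (1 - dl) * (c * a * L ^ (a - 1))
      ≤ c * a * L ^ (a - 1) * (1 + c * a * L ^ (a - 1)) + c * a * (a - 1) * L ^ (a - 2) := by
  have hLa2 : 0 < L ^ (a - 2) := rpow_pos_of_pos hL0 _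
  have hsplit : L ^ (a - 1) = L ^ (a - 2) * L := by
    rw [show a - 1 = a - 2 + 1 by ring, Real.rpow_add_one hL0.ne']
  have h3 : 0 ≤ c * a * L ^ (a - 2) := by positivity
  have h1 : c * a * L ^ (a - 2) * (1 - a) ≤ c * a * L ^ (a - 2) * (dl * L) :=
    mul_le_mul_of_nonneg_left hdLa h3
  rw [hsplit]
  nlinarith [sq_nonneg (c * a * (L ^ (a - 2) * L)), h1]


lemma aux_main (lam eps gam bet c m P x r : ℝ)
    (hlam : 0 < lam) (hlam2 : lam < 1/2) (heps : 0 < eps) (hgam : 0 < gam)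
    (hbet : 0 ≤ bet) (hm : 0 < m) (hmc : m ≤ c)
    (hx0 : 0 ≤ x) (hxP : x ≤ P) (hP1 : 1 ≤ P) (hr0 : 0 ≤ r)
    (hL1 : 1 ≤ Real.log P)
    (hwd : c * (lam + 1/2) * Real.log P ^ (lam + 1/2 - 1) ≤ min eps 1 / 8)
    (hbe : bet * (lam + 1/2) * Real.log P ^ (lam + 1/2 - 1) ≤ eps)
    (hdL : 1/2 - lam ≤ (min eps 1 / 8) * Real.log P)
    (hK5 : 8 * gam / ((eps / (2 * (1 + eps)) / lam) ^ lam * m * (lam + 1/2)) * Real.log P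
        ≤ P ^ (eps / 2)) :
    0 ≤ -(1 + c * (lam + 1/2) * Real.log P ^ (lam + 1/2 - 1)) *
          ((if 1 < x then bet * x * Real.log x ^ (lam + 1/2) else 0)
            + gam * (r * |Real.log r| ^ lam))
        + 1/2 * ((c * (lam + 1/2) * Real.log P ^ (lam + 1/2 - 1) *
              (1 + c * (lam + 1/2) * Real.log P ^ (lam + 1/2 - 1))
            + c * (lam + 1/2) * (lam + 1/2 - 1) * Real.log P ^ (lam + 1/2 - 2)) / P) * r ^ 2
        + P * ((eps * c + gam ^ 2 * (1 + eps) ^ (2 * lam + 2) / ((2 * lam + 1) * c)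
              + eps + bet) * Real.log P ^ (lam + 1/2) + 2 * gam) := by
  have hc : 0 < c := lt_of_lt_of_le hm hmc
  have hP0 : (0:ℝ) < P := by linarith
  have hL0 : (0:ℝ) < Real.log P := by linarith
  have ha0 : (0:ℝ) < lam + 1/2 := by linarith
  have hLa0 : 0 < Real.log P ^ (lam + 1/2) := rpow_pos_of_pos hL0 _
  have hLa1 : 0 < Real.log P ^ (lam + 1/2 - 1) := rpow_pos_of_pos hL0 _
  have hw0 : 0 ≤ c * (lam + 1/2) * Real.log P ^ (lam + 1/2 - 1) := by positivity
  have hB := step_beta bet eps c (lam + 1/2) P x (Real.log P)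
    (c * (lam + 1/2) * Real.log P ^ (lam + 1/2 - 1))
    hbet heps hc ha0 hx0 hxP hP0 rfl hLa0 rfl hw0 hbe
  have hXlb := step_X c (lam + 1/2) (min eps 1 / 8) (Real.log P) hc ha0 hL0
    (by linarith)
  have hZ := step_z lam eps gam c m P r (lam + 1/2) (min eps 1 / 8)
    (eps / (2 * (1 + eps))) (eps / (2 * (1 + eps)) / lam) (Real.log P)
    (c * (lam + 1/2) * Real.log P ^ (lam + 1/2 - 1))
    (c * (lam + 1/2) * Real.log P ^ (lam + 1/2 - 1) *
        (1 + c * (lam + 1/2) * Real.log P ^ (lam + 1/2 - 1))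
      + c * (lam + 1/2) * (lam + 1/2 - 1) * Real.log P ^ (lam + 1/2 - 2))
    hlam hlam2 heps hgam hm hmc rfl rfl rfl rfl hP1 hr0 rfl hL1 rfl hwd hXlb hK5
  have hEL : 0 ≤ P * (eps * Real.log P ^ (lam + 1/2)) := by positivity
  linarith [hB, hZ, hEL]

lemma aux_k (lam eps gam bet m Mm : ℝ)
    (hlam : 0 < lam) (hlam2 : lam < 1/2) (heps : 0 < eps) (hgam : 0 < gam)
    (hbet : 0 ≤ bet) (hm : 0 < m) (hmM : m ≤ Mm) :
    ∃ k : ℝ, Real.exp 1 ≤ k ∧ ∀ P : ℝ, k ≤ P →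
      1 ≤ Real.log P ∧
      Mm * (lam + 1/2) * Real.log P ^ (lam + 1/2 - 1) ≤ min eps 1 / 8 ∧
      bet * (lam + 1/2) * Real.log P ^ (lam + 1/2 - 1) ≤ eps ∧
      1/2 - lam ≤ (min eps 1 / 8) * Real.log P ∧
      8 * gam / ((eps / (2 * (1 + eps)) / lam) ^ lam * m * (lam + 1/2)) * Real.log P
        ≤ P ^ (eps / 2) := by
  set a := lam + 1/2 with ha
  set dl := min eps 1 / 8 with hdl
  have ha0 : 0 < a := by rw [ha]; linarith
  have ha1 : a < 1 := by rw [ha]; linarith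
  have hdl0 : 0 < dl := by rw [hdl]; have := lt_min heps one_pos; linarith
  have hMm : 0 < Mm := lt_of_lt_of_le hm hmM
  have hta0 : 0 < eps / (2 * (1 + eps)) / lam := by positivity
  have htal0 : 0 < (eps / (2 * (1 + eps)) / lam) ^ lam := rpow_pos_of_pos hta0 _
  set C4 := 8 * gam / ((eps / (2 * (1 + eps)) / lam) ^ lam * m * a) with hC4
  have hC40 : 0 < C4 := by
    rw [hC4]; exact div_pos (by linarith) (mul_pos (mul_pos htal0 hm) ha0)
  set c1 := max (max 1 (1 / (2 * dl)))
      (max ((Mm * a / dl) ^ (1 / (1 - a))) ((bet * a / eps) ^ (1 / (1 - a)))) with hc1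
  set q := max 1 (4 * C4 / eps) with hq
  have hq1 : (1:ℝ) ≤ q := le_max_left _ _
  have hq0 : (0:ℝ) < q := by linarith
  refine ⟨max (Real.exp c1) (q ^ ((4:ℝ) / eps)), ?_, ?_⟩
  · refine le_trans ?_ (le_max_left _ _)
    exact Real.exp_le_exp.mpr (le_trans (le_trans (le_max_left 1 _) (le_max_left _ _)) le_rfl)
  intro P hkP
  have hq4 : q ^ ((4:ℝ) / eps) ≤ P := le_trans (le_max_right _ _) hkP
  have hexpc1 : Real.exp c1 ≤ P := le_trans (le_max_left _ _) hkP
  have hP0 : 0 < P := lt_of_lt_of_le (Real.exp_pos c1) hexpc1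
  have hc1L : c1 ≤ Real.log P := by
    rw [← Real.log_exp c1]
    exact (Real.log_le_log_iff (Real.exp_pos _) hP0).mpr hexpc1
  have h1c1 : (1:ℝ) ≤ c1 := le_trans (le_max_left 1 _) (le_max_left _ _)
  have hL1 : 1 ≤ Real.log P := le_trans h1c1 hc1L
  have hL0 : 0 < Real.log P := by linarith
  have h1a : 0 < 1 - a := by linarith
  -- generic: from Q := (y/dl')^(1/(1-a)) ≤ L we get y * L^(a-1) ≤ dl'
  have key : ∀ y dl' : ℝ, 0 ≤ y → 0 < dl' →
      (y / dl') ^ (1 / (1 - a)) ≤ Real.log P → y * Real.log P ^ (a - 1) ≤ dl' := by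
    intro y dl' hy hdl' hQL
    have hQ0 : (0:ℝ) ≤ (y / dl') ^ (1 / (1 - a)) := Real.rpow_nonneg (by positivity) _
    have hpow : y / dl' ≤ Real.log P ^ (1 - a) := by
      have h2 : ((y / dl') ^ (1 / (1 - a))) ^ (1 - a) ≤ Real.log P ^ (1 - a) :=
        Real.rpow_le_rpow hQ0 hQL h1a.le
      rwa [← Real.rpow_mul (by positivity), one_div,
        inv_mul_cancel₀ h1a.ne', Real.rpow_one] at h2
    have hLpow : 0 < Real.log P ^ (1 - a) := rpow_pos_of_pos hL0 _
    rw [show a - 1 = -(1 - a) by ring, Real.rpow_neg hL0.le]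
    rw [mul_inv_le_iff₀ hLpow]
    rw [div_le_iff₀ hdl'] at hpow
    linarith [hpow]
  refine ⟨hL1, ?_, ?_, ?_, ?_⟩
  · exact key (Mm * a) dl (by positivity) hdl0
      (le_trans (le_trans (le_max_left _ _) (le_max_right _ _)) hc1L)
  · exact key (bet * a) eps (by positivity) heps
      (le_trans (le_trans (le_max_right _ _) (le_max_right _ _)) hc1L)
  · have h2 : 1 / (2 * dl) ≤ Real.log P :=
      le_trans (le_trans (le_max_right 1 _) (le_max_left _ _)) hc1L
    have h3 := mul_le_mul_of_nonneg_left h2 hdl0.le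
    have h4 : dl * (1 / (2 * dl)) = 1/2 := by field_simp [hdl0.ne']
    rw [h4] at h3
    linarith
  · -- hK5
    have hlog : Real.log P ≤ P ^ (eps / 4) / (eps / 4) :=
      Real.log_le_rpow_div hP0.le (by positivity)
    have hPe4 : 0 < P ^ (eps / 4) := rpow_pos_of_pos hP0 _
    have hqP : q ≤ P ^ (eps / 4) := by
      have h5 : (q ^ ((4:ℝ) / eps)) ^ (eps / 4) ≤ P ^ (eps / 4) :=
        Real.rpow_le_rpow (Real.rpow_nonneg hq0.le _) hq4 (by positivity)
      rwa [← Real.rpow_mul hq0.le,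
        show (4:ℝ) / eps * (eps / 4) = 1 by field_simp, Real.rpow_one] at h5
    have step1 : C4 * Real.log P ≤ (4 * C4 / eps) * P ^ (eps / 4) := by
      have := mul_le_mul_of_nonneg_left hlog hC40.le
      calc C4 * Real.log P ≤ C4 * (P ^ (eps / 4) / (eps / 4)) := this
        _ = (4 * C4 / eps) * P ^ (eps / 4) := by field_simp
    have step2 : (4 * C4 / eps) * P ^ (eps / 4) ≤ q * P ^ (eps / 4) :=
      mul_le_mul_of_nonneg_right (le_max_right _ _) hPe4.le
    have step3 : q * P ^ (eps / 4) ≤ P ^ (eps / 4) * P ^ (eps / 4) :=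
      mul_le_mul_of_nonneg_right hqP hPe4.le
    have step4 : P ^ (eps / 4) * P ^ (eps / 4) = P ^ (eps / 2) := by
      rw [← Real.rpow_add hP0]; congr 1; ring
    rw [hC4] at step1
    linarith [step1, step2, step3, step4.le, step4.ge]

open Classical in

/-- Proposition 4.2: for `λ ∈ (0, 1/2)`, `β ≥ 0`, `γ > 0`, `ε > 0`, `T > 0` and `μ̄` the
solution of the IVP `μ̄(0) = ε`, `μ̄′ = ε·μ̄ + γ²(1+ε)^{2λ+2}/((2λ+1)·μ̄) + ε + β`, there
exist a constant `k ≥ e` and a nondecreasing `C¹` function `ν ≥ 0` with `ν(0) = 0`, such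
that `φ(s,x) := (x+k)·exp(μ̄(s)·(ln(x+k))^{λ+1/2} + ν(s))` is `C^{1,2}` on `[0,T]×[0,∞)`
and satisfies `−∂ₓφ·(β·x·(ln x)^{λ+1/2}·𝟙_{x>1} + γ·|z|·|ln|z||^λ) + (1/2)·∂ₓₓφ·|z|²
+ ∂ₛφ ≥ 0` (the map `z ↦ |z|·|ln|z||^λ` being extended by `0` at `z = 0`). -/
theorem stmt_11 (lam β γ ε T : ℝ) (d : ℕ) (hd : 1 ≤ d)
    (hlam : lam ∈ Set.Ioo (0 : ℝ) (1 / 2)) (hβ : 0 ≤ β) (hγ : 0 < γ) (hε : 0 < ε)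
    (hT : 0 < T)
    (μ : ℝ → ℝ) (hμ0 : μ 0 = ε) (hμpos : ∀ s ∈ Set.Icc 0 T, 0 < μ s)
    (hμderiv : ∀ s ∈ Set.Icc 0 T,
      HasDerivWithinAt μ
        (ε * μ s + γ ^ 2 * (1 + ε) ^ (2 * lam + 2) / ((2 * lam + 1) * μ s) + ε + β)
        (Set.Icc 0 T) s) :
    ∃ k : ℝ, Real.exp 1 ≤ k ∧
    ∃ ν ν' : ℝ → ℝ, ν 0 = 0 ∧ (∀ s ∈ Set.Icc 0 T, 0 ≤ ν s) ∧
      MonotoneOn ν (Set.Icc 0 T) ∧ ContinuousOn ν' (Set.Icc 0 T) ∧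
      (∀ s ∈ Set.Icc 0 T, HasDerivWithinAt ν (ν' s) (Set.Icc 0 T) s) ∧
    ∃ φ φs φx φxx : ℝ → ℝ → ℝ,
      (∀ s x, φ s x =
        (x + k) * Real.exp (μ s * Real.log (x + k) ^ (lam + 1 / 2) + ν s)) ∧
      (∀ s ∈ Set.Icc 0 T, ∀ x ∈ Set.Ici (0 : ℝ),
        HasDerivWithinAt (fun t => φ t x) (φs s x) (Set.Icc 0 T) s ∧
        HasDerivWithinAt (fun u => φ s u) (φx s x) (Set.Ici 0) x ∧
        HasDerivWithinAt (fun u => φx s u) (φxx s x) (Set.Ici 0) x) ∧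
      ContinuousOn (fun p : ℝ × ℝ => φ p.1 p.2) (Set.Icc 0 T ×ˢ Set.Ici 0) ∧
      ContinuousOn (fun p : ℝ × ℝ => φs p.1 p.2) (Set.Icc 0 T ×ˢ Set.Ici 0) ∧
      ContinuousOn (fun p : ℝ × ℝ => φx p.1 p.2) (Set.Icc 0 T ×ˢ Set.Ici 0) ∧
      ContinuousOn (fun p : ℝ × ℝ => φxx p.1 p.2) (Set.Icc 0 T ×ˢ Set.Ici 0) ∧
      ∀ s ∈ Set.Icc 0 T, ∀ x ∈ Set.Ici (0 : ℝ), ∀ z : EuclideanSpace ℝ (Fin d),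
        0 ≤ -φx s x * ((if 1 < x then β * x * Real.log x ^ (lam + 1 / 2) else 0)
              + γ * (if z = 0 then 0 else ‖z‖ * |Real.log ‖z‖| ^ lam))
            + 1 / 2 * φxx s x * ‖z‖ ^ 2 + φs s x := by
  obtain ⟨hlam1, hlam2⟩ := hlam
  have hIccne : (Set.Icc (0:ℝ) T).Nonempty := ⟨0, by constructor <;> linarith⟩
  have hμc : ContinuousOn μ (Set.Icc 0 T) := fun s hs => (hμderiv s hs).continuousWithinAt
  obtain ⟨sm, hsm, hmin⟩ := isCompact_Icc.exists_isMinOn hIccne hμc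
  obtain ⟨sM, hsM, hmax⟩ := isCompact_Icc.exists_isMaxOn hIccne hμc
  set m := μ sm with hm
  set Mm := μ sM with hMm
  have hm0 : 0 < m := hμpos sm hsm
  have hmM : m ≤ Mm := hmin hsM
  have hmle : ∀ s ∈ Set.Icc 0 T, m ≤ μ s := fun s hs => hmin hs
  have hMle : ∀ s ∈ Set.Icc 0 T, μ s ≤ Mm := fun s hs => hmax hs
  obtain ⟨k, hek, hkP⟩ := aux_k lam ε γ β m Mm hlam1 hlam2 hε hγ hβ hm0 hmM
  have he1 : (1:ℝ) < Real.exp 1 := by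
    have := Real.add_one_le_exp 1; linarith
  have hk1 : (1:ℝ) < k := lt_of_lt_of_le he1 hek
  refine ⟨k, hek, fun s => 2 * γ * s, fun _ => 2 * γ, by norm_num, ?_, ?_, ?_, ?_, ?_⟩
  · intro s hs
    show (0:ℝ) ≤ 2 * γ * s
    nlinarith [hs.1]
  · intro s hs t ht hst
    show 2 * γ * s ≤ 2 * γ * t
    nlinarith
  · exact continuousOn_const
  · intro s hs
    have h := (hasDerivWithinAt_id s (Set.Icc 0 T)).const_mul (2 * γ)
    exact h.congr_deriv (by ring)
  have hS : ∀ p : ℝ × ℝ, p ∈ Set.Icc (0:ℝ) T ×ˢ Set.Ici (0:ℝ) → p.2 + k ≠ 0 := by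
    intro p hp
    have : 0 ≤ p.2 := hp.2
    have : (0:ℝ) < p.2 + k := by linarith
    exact this.ne'
  have hc2 : ContinuousOn (fun p : ℝ × ℝ => p.2 + k) (Set.Icc (0:ℝ) T ×ˢ Set.Ici (0:ℝ)) :=
    (continuous_snd.add continuous_const).continuousOn
  have hcL : ContinuousOn (fun p : ℝ × ℝ => Real.log (p.2 + k))
      (Set.Icc (0:ℝ) T ×ˢ Set.Ici (0:ℝ)) := hc2.log hS
  have hLne : ∀ p : ℝ × ℝ, p ∈ Set.Icc (0:ℝ) T ×ˢ Set.Ici (0:ℝ) →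
      Real.log (p.2 + k) ≠ 0 := by
    intro p hp
    have h2 : (0:ℝ) ≤ p.2 := hp.2
    have := (hkP (p.2 + k) (by linarith)).1
    linarith
  have hcLa : ∀ e : ℝ, ContinuousOn (fun p : ℝ × ℝ => Real.log (p.2 + k) ^ e)
      (Set.Icc (0:ℝ) T ×ˢ Set.Ici (0:ℝ)) :=
    fun e => hcL.rpow_const (fun p hp => Or.inl (hLne p hp))
  have hcmu : ContinuousOn (fun p : ℝ × ℝ => μ p.1) (Set.Icc (0:ℝ) T ×ˢ Set.Ici (0:ℝ)) :=
    hμc.comp continuous_fst.continuousOn (fun p hp => hp.1)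
  have hcE : ContinuousOn
      (fun p : ℝ × ℝ => Real.exp (μ p.1 * Real.log (p.2 + k) ^ (lam + 1/2) + 2 * γ * p.1))
      (Set.Icc (0:ℝ) T ×ˢ Set.Ici (0:ℝ)) :=
    Real.continuous_exp.comp_continuousOn
      ((hcmu.mul (hcLa _)).add ((continuous_const.mul continuous_fst).continuousOn))
  have hcw : ContinuousOn
      (fun p : ℝ × ℝ => 1 + μ p.1 * (lam + 1/2) * Real.log (p.2 + k) ^ (lam + 1/2 - 1))
      (Set.Icc (0:ℝ) T ×ˢ Set.Ici (0:ℝ)) :=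
    continuousOn_const.add ((hcmu.mul continuousOn_const).mul (hcLa _))
  refine ⟨fun s x => (x + k) * Real.exp (μ s * Real.log (x + k) ^ (lam + 1/2) + 2 * γ * s),
    fun s x => (x + k) * Real.exp (μ s * Real.log (x + k) ^ (lam + 1/2) + 2 * γ * s) *
      ((ε * μ s + γ ^ 2 * (1 + ε) ^ (2 * lam + 2) / ((2 * lam + 1) * μ s) + ε + β) *
        Real.log (x + k) ^ (lam + 1/2) + 2 * γ),
    fun s x => Real.exp (μ s * Real.log (x + k) ^ (lam + 1/2) + 2 * γ * s) *
      (1 + μ s * (lam + 1/2) * Real.log (x + k) ^ (lam + 1/2 - 1)),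
    fun s x => Real.exp (μ s * Real.log (x + k) ^ (lam + 1/2) + 2 * γ * s) *
      (μ s * (lam + 1/2) * Real.log (x + k) ^ (lam + 1/2 - 1) *
        (1 + μ s * (lam + 1/2) * Real.log (x + k) ^ (lam + 1/2 - 1))
        + μ s * (lam + 1/2) * (lam + 1/2 - 1) * Real.log (x + k) ^ (lam + 1/2 - 2)) / (x + k),
    fun s x => by norm_num, ?_, ?_, ?_, ?_, ?_, ?_⟩
  · -- derivatives
    intro s hs x hx
    have hx0 : 0 ≤ x := hx
    have hxk : 0 < x + k := by linarith
    have hL1 : 1 ≤ Real.log (x + k) := (hkP (x + k) (by linarith)).1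
    have hL0 : (0:ℝ) < Real.log (x + k) := by linarith
    refine ⟨?_, ?_, ?_⟩
    · -- s derivative
      have h1 : HasDerivWithinAt
          (fun t => μ t * Real.log (x + k) ^ (lam + 1/2) + 2 * γ * t)
          ((ε * μ s + γ ^ 2 * (1 + ε) ^ (2 * lam + 2) / ((2 * lam + 1) * μ s) + ε + β) *
            Real.log (x + k) ^ (lam + 1/2) + 2 * γ * 1) (Set.Icc 0 T) s :=
        ((hμderiv s hs).mul_const _).add ((hasDerivWithinAt_id s _).const_mul (2 * γ))
      have h2 := (h1.exp).const_mul (x + k)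
      exact h2.congr_deriv (by ring)
    · -- first x derivative
      have hlog : HasDerivAt (fun u : ℝ => Real.log (u + k)) ((x + k)⁻¹ * 1) x :=
        by have := (Real.hasDerivAt_log hxk.ne').comp x ((hasDerivAt_id x).add_const k); exact this
      have hrpow : HasDerivAt (fun u : ℝ => Real.log (u + k) ^ (lam + 1/2))
          ((lam + 1/2) * Real.log (x + k) ^ (lam + 1/2 - 1) * ((x + k)⁻¹ * 1)) x :=
        by have := (Real.hasDerivAt_rpow_const (p := lam + 1/2) (Or.inl hL0.ne')).comp x hlog; exact this
      have hg : HasDerivAt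
          (fun u : ℝ => μ s * Real.log (u + k) ^ (lam + 1/2) + 2 * γ * s)
          (μ s * ((lam + 1/2) * Real.log (x + k) ^ (lam + 1/2 - 1) * ((x + k)⁻¹ * 1))) x :=
        (hrpow.const_mul (μ s)).add_const (2 * γ * s)
      have hφ := (((hasDerivAt_id x).add_const k).mul hg.exp).hasDerivWithinAt
        (s := Set.Ici (0:ℝ))
      exact hφ.congr_deriv (by simp only [id]; field_simp)
    · -- second x derivative
      have hlog : HasDerivAt (fun u : ℝ => Real.log (u + k)) ((x + k)⁻¹ * 1) x :=
        by have := (Real.hasDerivAt_log hxk.ne').comp x ((hasDerivAt_id x).add_const k); exact this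
      have hrpow : HasDerivAt (fun u : ℝ => Real.log (u + k) ^ (lam + 1/2))
          ((lam + 1/2) * Real.log (x + k) ^ (lam + 1/2 - 1) * ((x + k)⁻¹ * 1)) x :=
        by have := (Real.hasDerivAt_rpow_const (p := lam + 1/2) (Or.inl hL0.ne')).comp x hlog; exact this
      have hg : HasDerivAt
          (fun u : ℝ => μ s * Real.log (u + k) ^ (lam + 1/2) + 2 * γ * s)
          (μ s * ((lam + 1/2) * Real.log (x + k) ^ (lam + 1/2 - 1) * ((x + k)⁻¹ * 1))) x :=
        (hrpow.const_mul (μ s)).add_const (2 * γ * s)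
      have hrpow2 : HasDerivAt (fun u : ℝ => Real.log (u + k) ^ (lam + 1/2 - 1))
          ((lam + 1/2 - 1) * Real.log (x + k) ^ (lam + 1/2 - 1 - 1) * ((x + k)⁻¹ * 1)) x :=
        by have := (Real.hasDerivAt_rpow_const (p := lam + 1/2 - 1) (Or.inl hL0.ne')).comp x hlog; exact this
      have hinner : HasDerivAt
          (fun u : ℝ => 1 + μ s * (lam + 1/2) * Real.log (u + k) ^ (lam + 1/2 - 1))
          (μ s * (lam + 1/2) *
            ((lam + 1/2 - 1) * Real.log (x + k) ^ (lam + 1/2 - 1 - 1) * ((x + k)⁻¹ * 1))) x :=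
        (hrpow2.const_mul (μ s * (lam + 1/2))).const_add 1
      have hφxx := (hg.exp.mul hinner).hasDerivWithinAt (s := Set.Ici (0:ℝ))
      exact hφxx.congr_deriv (by rw [show lam + 1/2 - 1 - 1 = lam + 1/2 - 2 by ring]; field_simp)
  · exact hc2.mul hcE
  · -- φs continuity
    have hcW : ContinuousOn
        (fun p : ℝ × ℝ => ε * μ p.1 + γ ^ 2 * (1 + ε) ^ (2 * lam + 2) / ((2 * lam + 1) * μ p.1)
          + ε + β) (Set.Icc (0:ℝ) T ×ˢ Set.Ici (0:ℝ)) := by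
      refine (((continuousOn_const.mul hcmu).add
        (continuousOn_const.div (continuousOn_const.mul hcmu) ?_)).add
          continuousOn_const).add continuousOn_const
      intro p hp
      have := hμpos p.1 hp.1
      have h2l : (0:ℝ) < 2 * lam + 1 := by linarith
      exact (mul_pos h2l this).ne'
    exact (hc2.mul hcE).mul ((hcW.mul (hcLa _)).add continuousOn_const)
  · exact hcE.mul hcw
  · -- φxx continuity
    refine (hcE.mul ?_).div hc2 hS
    exact (((hcmu.mul continuousOn_const).mul (hcLa _)).mul hcw).add
      ((((hcmu.mul continuousOn_const).mul continuousOn_const).mul (hcLa _)))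
  · -- the inequality
    intro s hs x hx z
    beta_reduce
    have hx0 : 0 ≤ x := hx
    have hxk : 0 < x + k := by linarith
    have hP := hkP (x + k) (by linarith)
    have hwd : μ s * (lam + 1/2) * Real.log (x + k) ^ (lam + 1/2 - 1) ≤ min ε 1 / 8 := by
      have h1 := mul_le_mul_of_nonneg_right
        (mul_le_mul_of_nonneg_right (hMle s hs) (by linarith : (0:ℝ) ≤ lam + 1/2))
        (Real.rpow_nonneg (by linarith [hP.1] : (0:ℝ) ≤ Real.log (x+k)) (lam + 1/2 - 1))
      linarith [hP.2.1]
    have key := aux_main lam ε γ β (μ s) m (x + k) x ‖z‖ hlam1 hlam2 hε hγ hβ hm0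
      (hmle s hs) hx0 (by linarith) (by linarith) (norm_nonneg z) hP.1 hwd
      hP.2.2.1 hP.2.2.2.1 hP.2.2.2.2
    have hz : (if z = 0 then 0 else ‖z‖ * |Real.log ‖z‖| ^ lam)
        = ‖z‖ * |Real.log ‖z‖| ^ lam := by
      split_ifs with h
      · rw [h]; simp
      · rfl
    rw [hz]
    have hE0 : 0 ≤ Real.exp (μ s * Real.log (x + k) ^ (lam + 1/2) + 2 * γ * s) :=
      (Real.exp_pos _).le
    have lift := mul_nonneg hE0 key
    exact le_trans lift (le_of_eq (by ring))
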